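/- (Generalized Pinsker inequality.) Let ρ > 0 and let Λ, Γ be finite nonnegative Borel measures on a compact set Ξ ⊂ ℝ^d with Λ(Ξ) ≤ ρ and Γ(Ξ) ≤ ρ. Then B(Λ,Γ) ≥ ‖Λ − Γ‖_TV² / (2ρ), where ‖Λ − Γ‖_TV denotes the total variation norm of the signed measure Λ − Γ. -/

import Mathlib

open MeasureTheory Set
open scoped Classical

noncomputable section

/-- Kullback–Leibler divergence `D(φ,ϕ)` of measures on `Ξ`: equal to
`∫_Ξ log(dφ/dϕ) dφ` when `φ ≪ ϕ` and the log-density is `φ`-integrable on `Ξ`,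
and `+∞` otherwise. -/
def KLdiv {E : Type*} [MeasurableSpace E] (Ξ : Set E) (φ ϕ : Measure E) : EReal :=
  if φ ≪ ϕ ∧ IntegrableOn (fun ξ => Real.log (φ.rnDeriv ϕ ξ).toReal) Ξ φ
  then ((∫ ξ in Ξ, Real.log (φ.rnDeriv ϕ ξ).toReal ∂φ : ℝ) : EReal)
  else ⊤

/-- The prox function `B(Λ,Γ)` for nonnegative measures on `Ξ`:
`∫_Ξ log(dΛ/dΓ) dΛ − (Λ(Ξ) − Γ(Ξ))` when `Λ ≪ Γ` and `∫_Ξ |log(dΛ/dΓ)| dΛ < ∞`,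
and `+∞` otherwise. -/
def Bprox {E : Type*} [MeasurableSpace E] (Ξ : Set E) (Λ Γ : Measure E) : EReal :=
  if Λ ≪ Γ ∧ IntegrableOn (fun ξ => Real.log (Λ.rnDeriv Γ ξ).toReal) Ξ Λ
  then (((∫ ξ in Ξ, Real.log (Λ.rnDeriv Γ ξ).toReal ∂Λ) - ((Λ Ξ).toReal - (Γ Ξ).toReal) : ℝ) : EReal)
  else ⊤

/-- `H(ρ, ρ') = ρ log(ρ/ρ') − ρ + ρ'` (with `0 log 0 = 0`, automatic since
`Real.log 0 = 0`). -/
def Hfun (ρ ρ' : ℝ) : ℝ := ρ * Real.log (ρ / ρ') - ρ + ρ'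

/-! ### Auxiliary pointwise inequality (a refined Pinsker-type bound) -/

private def Gaux (x : ℝ) : ℝ := (x + 1) * Real.log x - 2 * (x - 1)
private def Faux (x : ℝ) : ℝ := 2 * (x + 2) * (x * Real.log x - x + 1) - 3 * (x - 1) ^ 2

private lemma Gaux_hasDeriv {x : ℝ} (hx : 0 < x) :
    HasDerivAt Gaux (Real.log x + (x + 1) * x⁻¹ - 2) x := by
  have h1 : HasDerivAt (fun x : ℝ => (x + 1) * Real.log x)
      (1 * Real.log x + (x + 1) * x⁻¹) x :=
    ((hasDerivAt_id x).add_const 1).mul (Real.hasDerivAt_log hx.ne')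
  have h2 : HasDerivAt (fun x : ℝ => 2 * (x - 1)) 2 x := by
    simpa using ((hasDerivAt_id x).sub_const 1).const_mul 2
  have h3 := h1.sub h2
  simp only [one_mul] at h3
  exact h3

private lemma Faux_hasDeriv {x : ℝ} (hx : 0 < x) :
    HasDerivAt Faux (4 * Gaux x) x := by
  have h1 : HasDerivAt (fun x : ℝ => 2 * (x + 2) * (x * Real.log x - x + 1))
      (2 * (x * Real.log x - x + 1) + 2 * (x + 2) * Real.log x) x := by
    have ha : HasDerivAt (fun x : ℝ => 2 * (x + 2)) 2 x := by
      simpa using ((hasDerivAt_id x).add_const 2).const_mul 2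
    have hb : HasDerivAt (fun x : ℝ => x * Real.log x - x + 1) (Real.log x) x := by
      simpa using ((Real.hasDerivAt_mul_log hx.ne').sub (hasDerivAt_id x)).add_const 1
    exact ha.mul hb
  have h2 : HasDerivAt (fun x : ℝ => 3 * (x - 1) ^ 2) (3 * (2 * (x - 1))) x := by
    simpa using (((hasDerivAt_id x).sub_const 1).pow 2).const_mul 3
  have := h1.sub h2
  have e : 4 * Gaux x = 2 * (x * Real.log x - x + 1) + 2 * (x + 2) * Real.log x - 3 * (2 * (x - 1)) := by
    unfold Gaux
    ring
  rw [e]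
  exact this

private lemma Gaux_deriv_nonneg {x : ℝ} (hx : 0 < x) : 0 ≤ deriv Gaux x := by
  rw [(Gaux_hasDeriv hx).deriv]
  have h := Real.log_le_sub_one_of_pos (inv_pos.mpr hx)
  rw [Real.log_inv] at h
  have hx' : (x + 1) * x⁻¹ = 1 + x⁻¹ := by field_simp
  nlinarith [h]

private lemma Gaux_one : Gaux 1 = 0 := by simp [Gaux]
private lemma Faux_one : Faux 1 = 0 := by simp [Faux]

private lemma Gaux_mono {a b : ℝ} (ha : 0 < a) : MonotoneOn Gaux (Icc a b) := by
  apply monotoneOn_of_deriv_nonneg (convex_Icc a b)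
  · intro y hy
    exact ((Gaux_hasDeriv (ha.trans_le hy.1)).differentiableAt.continuousAt).continuousWithinAt
  · intro y hy
    rw [interior_Icc] at hy
    exact (Gaux_hasDeriv (ha.trans hy.1)).differentiableAt.differentiableWithinAt
  · intro y hy
    rw [interior_Icc] at hy
    exact Gaux_deriv_nonneg (ha.trans hy.1)

private lemma Gaux_nonpos {x : ℝ} (hx : 0 < x) (hx1 : x ≤ 1) : Gaux x ≤ 0 := by
  have := Gaux_mono hx (left_mem_Icc.mpr hx1) (right_mem_Icc.mpr hx1) hx1
  rwa [Gaux_one] at this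

private lemma Gaux_nonneg {x : ℝ} (hx1 : 1 ≤ x) : 0 ≤ Gaux x := by
  have := Gaux_mono one_pos (left_mem_Icc.mpr hx1) (right_mem_Icc.mpr hx1) hx1
  rwa [Gaux_one] at this

private lemma Faux_nonneg {x : ℝ} (hx : 0 ≤ x) : 0 ≤ Faux x := by
  rcases eq_or_lt_of_le hx with h | hx'
  · simp [Faux, ← h]; norm_num
  rcases le_or_gt x 1 with h1 | h1
  · have hanti : AntitoneOn Faux (Icc x 1) := by
      apply antitoneOn_of_deriv_nonpos (convex_Icc x 1)
      · intro y hy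
        exact ((Faux_hasDeriv (hx'.trans_le hy.1)).differentiableAt.continuousAt).continuousWithinAt
      · intro y hy
        rw [interior_Icc] at hy
        exact (Faux_hasDeriv (hx'.trans hy.1)).differentiableAt.differentiableWithinAt
      · intro y hy
        rw [interior_Icc] at hy
        rw [(Faux_hasDeriv (hx'.trans hy.1)).deriv]
        have := Gaux_nonpos (hx'.trans hy.1) hy.2.le
        linarith
    have := hanti (left_mem_Icc.mpr h1) (right_mem_Icc.mpr h1) h1
    rwa [Faux_one] at this
  · have hmono : MonotoneOn Faux (Icc 1 x) := by
      apply monotoneOn_of_deriv_nonneg (convex_Icc 1 x)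
      · intro y hy
        exact ((Faux_hasDeriv (lt_of_lt_of_le one_pos hy.1)).differentiableAt.continuousAt).continuousWithinAt
      · intro y hy
        rw [interior_Icc] at hy
        exact (Faux_hasDeriv (lt_of_lt_of_le one_pos hy.1.le)).differentiableAt.differentiableWithinAt
      · intro y hy
        rw [interior_Icc] at hy
        rw [(Faux_hasDeriv (lt_of_lt_of_le one_pos hy.1.le)).deriv]
        have := Gaux_nonneg hy.1.le
        linarith
    have := hmono (left_mem_Icc.mpr h1.le) (right_mem_Icc.mpr h1.le) h1.le
    rwa [Faux_one] at this

/-- Key pointwise inequality: `3(x−1)² ≤ 2(x+2)(x log x − x + 1)` for `x ≥ 0`. -/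
private lemma key_ineq {x : ℝ} (hx : 0 ≤ x) :
    3 * (x - 1) ^ 2 ≤ 2 * (x + 2) * (x * Real.log x - x + 1) := by
  have := Faux_nonneg hx
  unfold Faux at this
  linarith

private lemma phi_nonneg {x : ℝ} (hx : 0 ≤ x) : 0 ≤ x * Real.log x - x + 1 := by
  have := key_ineq hx
  nlinarith [sq_nonneg (x - 1)]

private lemma ptwise {t x : ℝ} (hx : 0 ≤ x) :
    2 * t * |x - 1| ≤ t ^ 2 * (x * Real.log x - x + 1) + (2 / 3) * (x + 2) := by
  have key := key_ineq hx
  have hb : (0:ℝ) < x + 2 := by linarith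
  have ha : |x - 1| ^ 2 = (x - 1) ^ 2 := sq_abs _
  have ha0 : 0 ≤ |x - 1| := abs_nonneg _
  nlinarith [sq_nonneg (t * |x - 1| - (2 / 3) * (x + 2)),
    mul_nonneg (sq_nonneg t) (sub_nonneg.mpr key), sq_nonneg t]

/-- Generalized Pinsker inequality:  if `Λ(Ξ) ≤ ρ` and `Γ(Ξ) ≤ ρ` then
`B(Λ,Γ) ≥ ‖Λ − Γ‖_TV² / (2ρ)`, where `‖Λ − Γ‖_TV = |Λ − Γ|(Ξ)` is the total
variation norm of the signed measure `Λ − Γ`. -/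
theorem stmt_7 {d : ℕ} (Ξ : Set (EuclideanSpace ℝ (Fin d))) (hΞcomp : IsCompact Ξ)
    (ρ : ℝ) (hρ : 0 < ρ)
    (Λ Γ : Measure (EuclideanSpace ℝ (Fin d)))
    (hΛfin : IsFiniteMeasure Λ) (hΓfin : IsFiniteMeasure Γ)
    (hΛsupp : Λ Ξᶜ = 0) (hΓsupp : Γ Ξᶜ = 0)
    (hΛρ : (Λ Ξ).toReal ≤ ρ) (hΓρ : (Γ Ξ).toReal ≤ ρ) :
    ((((Λ.toSignedMeasure - Γ.toSignedMeasure).totalVariation Ξ).toReal ^ 2 / (2 * ρ)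
        : ℝ) : EReal)
      ≤ Bprox Ξ Λ Γ := by
  haveI := hΛfin; haveI := hΓfin
  haveI : Λ.HaveLebesgueDecomposition Γ := Measure.haveLebesgueDecomposition_of_sigmaFinite Λ Γ
  by_cases hcond : Λ ≪ Γ ∧ IntegrableOn (fun ξ => Real.log (Λ.rnDeriv Γ ξ).toReal) Ξ Λ
  swap
  · rw [Bprox, if_neg hcond]; exact le_top
  obtain ⟨hac, hint⟩ := hcond
  rw [Bprox, if_pos ⟨hac, hint⟩, EReal.coe_le_coe_iff]
  set f : EuclideanSpace ℝ (Fin d) → ℝ := fun x => (Λ.rnDeriv Γ x).toReal with hf_def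
  have hf_nonneg : ∀ x, 0 ≤ f x := fun x => ENNReal.toReal_nonneg
  have hΞm : MeasurableSet Ξ := hΞcomp.isClosed.measurableSet
  have hmemΛ : ∀ᵐ x ∂Λ, x ∈ Ξ := by
    rw [ae_iff]; simpa [Set.compl_def] using hΛsupp
  have hΛr : Λ.restrict Ξ = Λ := Measure.restrict_eq_self_of_ae_mem hmemΛ
  have hf_int : Integrable f Γ := Measure.integrable_toReal_rnDeriv
  have hlog_int : Integrable (fun x => Real.log (f x)) Λ := by
    rwa [IntegrableOn, hΛr] at hint
  have hflog_int : Integrable (fun x => f x * Real.log (f x)) Γ := by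
    have := (MeasureTheory.integrable_rnDeriv_smul_iff hac).mpr hlog_int
    simpa [smul_eq_mul] using this
  have habs_int : Integrable (fun x => |f x - 1|) Γ := (hf_int.sub (integrable_const 1)).abs
  have hg_int : Integrable (fun x => f x * Real.log (f x) - f x + 1) Γ :=
    (hflog_int.sub hf_int).add (integrable_const 1)
  have hΛu : Λ Set.univ = Λ Ξ := by
    rw [← measure_add_measure_compl hΞm, hΛsupp, add_zero]
  have hΓu : Γ Set.univ = Γ Ξ := by
    rw [← measure_add_measure_compl hΞm, hΓsupp, add_zero]
  -- the Bregman value as a single integral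
  set B : ℝ := ∫ x, (f x * Real.log (f x) - f x + 1) ∂Γ with hB_def
  have hI1 : ∫ x in Ξ, Real.log (f x) ∂Λ = ∫ x, f x * Real.log (f x) ∂Γ := by
    rw [hΛr, ← MeasureTheory.integral_rnDeriv_smul hac]
    simp [smul_eq_mul]
    rfl
  have hΛΞ : (Λ Ξ).toReal = ∫ x, f x ∂Γ := by
    rw [Measure.integral_toReal_rnDeriv hac, measureReal_def, hΛu]
  have hΓΞ : (Γ Ξ).toReal = ∫ x, (1:ℝ) ∂Γ := by
    simp [measureReal_def, hΓu]
  have hB_eq : (∫ ξ in Ξ, Real.log (Λ.rnDeriv Γ ξ).toReal ∂Λ)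
      - ((Λ Ξ).toReal - (Γ Ξ).toReal) = B := by
    have e1 : B = (∫ x, (f x * Real.log (f x) - f x) ∂Γ) + ∫ x, (1:ℝ) ∂Γ :=
      hB_def.trans (integral_add (hflog_int.sub hf_int) (integrable_const 1))
    have e2 : (∫ x, (f x * Real.log (f x) - f x) ∂Γ)
        = (∫ x, f x * Real.log (f x) ∂Γ) - ∫ x, f x ∂Γ := integral_sub hflog_int hf_int
    have e3 : (∫ ξ in Ξ, Real.log (Λ.rnDeriv Γ ξ).toReal ∂Λ) = ∫ x in Ξ, Real.log (f x) ∂Λ := rfl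
    rw [e3, hI1, hΛΞ, hΓΞ]
    linarith
  rw [hB_eq]
  have hB0 : 0 ≤ B :=
    integral_nonneg fun x => phi_nonneg (hf_nonneg x)
  -- total variation bound
  set T' : ℝ := ∫ x, |f x - 1| ∂Γ with hT'_def
  have hT'0 : 0 ≤ T' := integral_nonneg fun x => abs_nonneg _
  have hs_apply : ∀ A : Set (EuclideanSpace ℝ (Fin d)), MeasurableSet A →
      (Λ.toSignedMeasure - Γ.toSignedMeasure) A = ∫ x in A, (f x - 1) ∂Γ := by
    intro A hA
    rw [Measure.toSignedMeasure_sub_apply hA,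
      integral_sub (hf_int.integrableOn) (integrableOn_const (measure_lt_top _ _).ne)]
    rw [← Measure.setIntegral_toReal_rnDeriv hac A]
    simp
    rfl
  have hTV_le : (((Λ.toSignedMeasure - Γ.toSignedMeasure).totalVariation Ξ)).toReal ≤ T' := by
    set s := Λ.toSignedMeasure - Γ.toSignedMeasure with hs
    obtain ⟨i, hi₁, hi₂, hi₃, hpos, hneg⟩ := s.toJordanDecomposition_spec
    have hsub_int : Integrable (fun x => f x - 1) Γ := hf_int.sub (integrable_const 1)
    have hTV : (s.totalVariation Ξ).toReal = s (i ∩ Ξ) + -s (iᶜ ∩ Ξ) := by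
      rw [SignedMeasure.totalVariation, Measure.add_apply, hpos, hneg,
        SignedMeasure.toMeasureOfZeroLE_apply _ hi₂ hi₁ hΞm,
        SignedMeasure.toMeasureOfLEZero_apply _ hi₃ hi₁.compl hΞm]
      rw [ENNReal.toReal_add (by simp) (by simp)]
      simp
    rw [hTV, hs_apply _ (hi₁.inter hΞm), hs_apply _ (hi₁.compl.inter hΞm)]
    have h1 : ∫ x in i ∩ Ξ, (f x - 1) ∂Γ ≤ ∫ x in i ∩ Ξ, |f x - 1| ∂Γ :=
      integral_mono hsub_int.integrableOn habs_int.integrableOn fun x => le_abs_self _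
    have h2 : -∫ x in iᶜ ∩ Ξ, (f x - 1) ∂Γ ≤ ∫ x in iᶜ ∩ Ξ, |f x - 1| ∂Γ := by
      rw [← integral_neg]
      exact integral_mono hsub_int.integrableOn.neg habs_int.integrableOn fun x => neg_le_abs _
    have hunion : ∫ x in i ∩ Ξ, |f x - 1| ∂Γ + ∫ x in iᶜ ∩ Ξ, |f x - 1| ∂Γ
        = ∫ x in Ξ, |f x - 1| ∂Γ := by
      rw [← setIntegral_union (Disjoint.mono inter_subset_left inter_subset_left
          disjoint_compl_right) (hi₁.compl.inter hΞm) habs_int.integrableOn habs_int.integrableOn]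
      congr 1
      rw [inter_comm i Ξ, inter_comm iᶜ Ξ, inter_union_compl]
    have hfull : ∫ x in Ξ, |f x - 1| ∂Γ ≤ ∫ x, |f x - 1| ∂Γ :=
      setIntegral_le_integral habs_int (Filter.Eventually.of_forall fun x => abs_nonneg _)
    rw [hT'_def]
    linarith
  -- the main estimate: for every `t > 0`, `2 t T' ≤ t² B + 2ρ`
  have hEst : ∀ t : ℝ, 2 * t * T' ≤ t ^ 2 * B + 2 * ρ := by
    intro t
    have hmono : ∫ x, 2 * t * |f x - 1| ∂Γ
        ≤ ∫ x, (t ^ 2 * (f x * Real.log (f x) - f x + 1) + (2 / 3) * (f x + 2)) ∂Γ := by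
      refine integral_mono (habs_int.const_mul _)
        ((hg_int.const_mul _).add ((hf_int.add (integrable_const 2)).const_mul _))
        fun x => ptwise (hf_nonneg x)
    have e1 : ∫ x, (t ^ 2 * (f x * Real.log (f x) - f x + 1) + (2 / 3) * (f x + 2)) ∂Γ
        = (∫ x, t ^ 2 * (f x * Real.log (f x) - f x + 1) ∂Γ) + ∫ x, (2 / 3) * (f x + 2) ∂Γ :=
      integral_add (hg_int.const_mul _) ((hf_int.add (integrable_const 2)).const_mul _)
    have e2 : (∫ x, t ^ 2 * (f x * Real.log (f x) - f x + 1) ∂Γ) = t ^ 2 * B :=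
      integral_const_mul _ _
    have e3 : (∫ x, (2 / 3 : ℝ) * (f x + 2) ∂Γ) = (2 / 3) * ∫ x, (f x + 2) ∂Γ :=
      integral_const_mul _ _
    have e4 : (∫ x, (f x + 2) ∂Γ) = (∫ x, f x ∂Γ) + ∫ x, (2:ℝ) ∂Γ :=
      integral_add hf_int (integrable_const 2)
    have e5 : (∫ x, 2 * t * |f x - 1| ∂Γ) = 2 * t * T' := integral_const_mul _ _
    rw [e5, e1, e2, e3, e4] at hmono
    have hmass : ∫ x, f x ∂Γ + ∫ x, (2:ℝ) ∂Γ ≤ 3 * ρ := by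
      have h1 : ∫ x, f x ∂Γ ≤ ρ := by rw [← hΛΞ]; exact hΛρ
      have h2 : ∫ x, (2:ℝ) ∂Γ = 2 * (Γ Ξ).toReal := by
        simp [measureReal_def, hΓu, mul_comm]
      linarith
    calc 2 * t * T' ≤ t ^ 2 * B + 2 / 3 * (∫ x, f x ∂Γ + ∫ x, (2:ℝ) ∂Γ) := hmono
    _ ≤ t ^ 2 * B + 2 * ρ := by linarith
  -- conclude `T'^2 ≤ 2ρB`
  have hT'sq : T' ^ 2 ≤ 2 * ρ * B := by
    rcases eq_or_lt_of_le hB0 with hB | hB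
    · have hT'z : T' ≤ 0 := by
        by_contra h
        push_neg at h
        have := hEst (4 * ρ / T')
        rw [← hB] at this
        have h4 : 2 * (4 * ρ / T') * T' = 8 * ρ := by field_simp; ring
        rw [h4] at this
        nlinarith
      have : T' = 0 := le_antisymm hT'z hT'0
      simp [this, ← hB]
    · set t := Real.sqrt (2 * ρ / B) with ht_def
      have htpos : 0 < t := Real.sqrt_pos.mpr (by positivity)
      have ht2 : t ^ 2 = 2 * ρ / B := Real.sq_sqrt (by positivity)
      have h := hEst t
      rw [ht2] at h
      have hdb : 2 * ρ / B * B = 2 * ρ := by field_simp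
      rw [hdb] at h
      have h1 : t * T' ≤ 2 * ρ := by linarith
      have h2 : (t * T') ^ 2 ≤ (2 * ρ) ^ 2 := by
        apply sq_le_sq'
        · nlinarith [mul_nonneg htpos.le hT'0]
        · exact h1
      rw [mul_pow, ht2, div_mul_eq_mul_div, div_le_iff₀ hB] at h2
      nlinarith [hρ]
  have hTV0 : 0 ≤ (((Λ.toSignedMeasure - Γ.toSignedMeasure).totalVariation Ξ)).toReal :=
    ENNReal.toReal_nonneg
  have hTsq : (((Λ.toSignedMeasure - Γ.toSignedMeasure).totalVariation Ξ)).toReal ^ 2 ≤ T' ^ 2 :=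
    pow_le_pow_left₀ hTV0 hTV_le 2
  rw [div_le_iff₀ (by positivity)]
  nlinarith
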